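/- Let (G,∼,R) be a framed turbulence chart that is amply framed. Then the reduced nonnegative space F_{≥0,red} := F_{≥0}/ℝE equals the full reduced space F_red := F/ℝE, where F is the space of all (not necessarily nonnegative) flows, F_{≥0} the cone of nonnegative flows, and ℝE is the linear span of the indicator vectors of exceptional trails. -/

import Mathlib

open Finset

/-- A turbulence chart: a finite undirected graph given by half-edges `H` with a
fixed-point-free involution `op` pairing half-edges into edges, a vertex map `vert`,
and at each internal vertex a partition of its half-edges into two nonempty classes,
encoded by `side : H → Bool`. -/
structure TurbChart where
  V : Type
  H : Type
  [fintV : Fintype V]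
  [decV : DecidableEq V]
  [fintH : Fintype H]
  [decH : DecidableEq H]
  vert : H → V
  op : H → H
  side : H → Bool
  op_op : ∀ h, op (op h) = h
  op_ne : ∀ h, op h ≠ h
  vert_cover : ∀ v, ∃ h, vert h = v
  sides_nonempty : ∀ v,
    2 ≤ (Finset.univ.filter fun h => vert h = v).card →
    ∀ b : Bool, ∃ h, vert h = v ∧ side h = b

attribute [instance] TurbChart.fintV TurbChart.decV TurbChart.fintH TurbChart.decH

namespace TurbChart

variable (T : TurbChart)

def degree (v : T.V) : ℕ := (Finset.univ.filter fun h => T.vert h = v).card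

def Fringe (v : T.V) : Prop := T.degree v = 1

def Internal (v : T.V) : Prop := 2 ≤ T.degree v

instance : DecidablePred T.Fringe := fun v =>
  decidable_of_iff (T.degree v = 1) Iff.rfl

instance : DecidablePred T.Internal := fun v =>
  decidable_of_iff (2 ≤ T.degree v) Iff.rfl

/-- A flow on a turbulence chart: a labelling of edges (encoded as an `op`-invariant
function on half-edges) conserving flow across the two classes at each internal vertex. -/
def IsFlow (F : T.H → ℝ) : Prop :=
  (∀ h, F (T.op h) = F h) ∧
  ∀ v, T.Internal v →
    ∑ h ∈ Finset.univ.filter (fun h => T.vert h = v ∧ T.side h = true), F h =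
    ∑ h ∈ Finset.univ.filter (fun h => T.vert h = v ∧ T.side h = false), F h

/-- The strength of a flow: half the sum of its values over fringe incidences. -/
noncomputable def strength (F : T.H → ℝ) : ℝ :=
  (1 / 2) * ∑ h ∈ Finset.univ.filter (fun h => T.Fringe (T.vert h)), F h

/-- The turbulence polyhedron `F₁(G,∼)`: nonnegative flows of strength 1. -/
def unitFlows : Set (T.H → ℝ) :=
  {F | T.IsFlow F ∧ (∀ h, 0 ≤ F h) ∧ T.strength F = 1}

/-- A string: a walk along oriented edges (an oriented edge is encoded by its tail
half-edge `a`, its head half-edge being `op a`) which crosses the class partition at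
each internal vertex it passes through. -/
def IsString (l : List T.H) : Prop :=
  List.Chain' (fun a b => T.vert (T.op a) = T.vert b ∧ T.side (T.op a) ≠ T.side b) l

/-- A route: a nonempty string starting and ending at fringe vertices. -/
def IsRoute (l : List T.H) : Prop :=
  T.IsString l ∧ l ≠ [] ∧
  (∀ h ∈ l.head?, T.Fringe (T.vert h)) ∧
  (∀ h ∈ l.getLast?, T.Fringe (T.vert (T.op h)))

/-- A band: a nonempty cyclically composable string which is not a proper power. -/
def IsBand (l : List T.H) : Prop :=
  l ≠ [] ∧ T.IsString (l ++ l) ∧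
  ¬ ∃ (c : List T.H) (k : ℕ), 2 ≤ k ∧ l = (List.replicate k c).flatten

def Acyclic : Prop := ¬ ∃ l, T.IsBand l

/-- The indicator vector of a walk: multiplicity of each edge (in either orientation). -/
noncomputable def indic (l : List T.H) : T.H → ℝ :=
  fun h => ((l.count h + l.count (T.op h) : ℕ) : ℝ)

/-- The inverse of a string. -/
def inv (l : List T.H) : List T.H := (l.map T.op).reverse

end TurbChart

/-- A framing on a turbulence chart: a linear order on each class of half-edges. -/
structure Framing (T : TurbChart) where
  lt : T.H → T.H → Prop
  lt_irrefl : ∀ h, ¬ lt h h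
  lt_trans : ∀ a b c, lt a b → lt b c → lt a c
  lt_compat : ∀ a b, lt a b → T.vert a = T.vert b ∧ T.side a = T.side b
  lt_total : ∀ a b, a ≠ b → T.vert a = T.vert b → T.side a = T.side b →
    lt a b ∨ lt b a

namespace TurbChart

variable (T : TurbChart)

/-- Substrings of a trail (a route, or a band where substrings of any power are allowed),
up to inverses. -/
def Substr (t : List T.H) (isBand : Bool) (s : List T.H) : Prop :=
  if isBand then
    ∃ k : ℕ, s <:+: (List.replicate k t).flatten ∨ s <:+: T.inv (List.replicate k t).flatten
  else s <:+: t ∨ s <:+: T.inv t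

/-- `p` contains the "low" member of an incompatibility whose "high" member lies in `q`. -/
def IsIncompatPair (R : Framing T) (p q : List T.H × Bool) : Prop :=
  ∃ (e₁ e₂ f₁ f₂ : T.H) (s : List T.H),
    R.lt (T.op e₁) (T.op e₂) ∧ R.lt f₁ f₂ ∧
    T.IsString (e₁ :: (s ++ [f₁])) ∧ T.IsString (e₂ :: (s ++ [f₂])) ∧
    T.Substr p.1 p.2 (e₁ :: (s ++ [f₁])) ∧ T.Substr q.1 q.2 (e₂ :: (s ++ [f₂]))

def Compatible (R : Framing T) (p q : List T.H × Bool) : Prop :=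
  ¬ (T.IsIncompatPair R p q ∨ T.IsIncompatPair R q p)

/-- A trail: a route (`Bool` component `false`) or a band (`true`). -/
def IsTrail (t : List T.H × Bool) : Prop :=
  if t.2 then T.IsBand t.1 else T.IsRoute t.1

noncomputable def indicT (t : List T.H × Bool) : T.H → ℝ := T.indic t.1

def RouteEquiv (l₁ l₂ : List T.H) : Prop := l₂ = l₁ ∨ l₂ = T.inv l₁

def BandEquiv (l₁ l₂ : List T.H) : Prop :=
  ∃ x y, l₁ = x ++ y ∧ (l₂ = y ++ x ∨ l₂ = T.inv (y ++ x))

def TrailEquiv (t₁ t₂ : List T.H × Bool) : Prop :=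
  t₁.2 = t₂.2 ∧ (if t₁.2 then T.BandEquiv t₁.1 t₂.1 else T.RouteEquiv t₁.1 t₂.1)

/-- A bundle: a set of pairwise compatible (hence self-compatible) trails, taken with
distinct representatives up to equivalence of trails. -/
def IsBundle (R : Framing T) (S : Finset (List T.H × Bool)) : Prop :=
  (∀ t ∈ S, T.IsTrail t) ∧
  (∀ t₁ ∈ S, ∀ t₂ ∈ S, T.Compatible R t₁ t₂) ∧
  (∀ t₁ ∈ S, ∀ t₂ ∈ S, T.TrailEquiv t₁ t₂ → t₁ = t₂)

/-- The bundle simplihedron `Δ₁(K̄)`: unit bundle combinations of the bundle. -/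
def unitBundleSimplihedron (S : Finset (List T.H × Bool)) : Set (T.H → ℝ) :=
  {F | ∃ a : List T.H × Bool → ℝ,
    (∀ t ∈ S, 0 ≤ a t) ∧
    F = ∑ t ∈ S, a t • T.indicT t ∧
    ∑ t ∈ S.filter (fun t => t.2 = false), a t = 1}

/-- Every nonnegative flow has at most one representation as a positive bundle
combination (up to equivalence of trails). -/
def UniquePositiveCombos (R : Framing T) : Prop :=
  ∀ (S₁ S₂ : Finset (List T.H × Bool)) (a₁ a₂ : List T.H × Bool → ℝ),
    T.IsBundle R S₁ → T.IsBundle R S₂ →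
    (∀ t ∈ S₁, 0 < a₁ t) → (∀ t ∈ S₂, 0 < a₂ t) →
    (∑ t ∈ S₁, a₁ t • T.indicT t) = (∑ t ∈ S₂, a₂ t • T.indicT t) →
    (∀ t₁ ∈ S₁, ∃ t₂ ∈ S₂, T.TrailEquiv t₁ t₂ ∧ a₁ t₁ = a₂ t₂) ∧
    (∀ t₂ ∈ S₂, ∃ t₁ ∈ S₁, T.TrailEquiv t₁ t₂ ∧ a₁ t₁ = a₂ t₂)

end TurbChart

namespace TurbChart

variable (T : TurbChart)

/-- An edge (half-edge) is valid if some flow is nonzero on it. -/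
def ValidEdge (h : T.H) : Prop := ∃ F : T.H → ℝ, T.IsFlow F ∧ F h ≠ 0

/-- A trail is exceptional if it is compatible with every trail. -/
def Exceptional (R : Framing T) (t : List T.H × Bool) : Prop :=
  T.IsTrail t ∧ ∀ t', T.IsTrail t' → T.Compatible R t t'

/-- Amply framed: every valid edge is part of an exceptional trail. -/
def AmplyFramed (R : Framing T) : Prop :=
  ∀ h, T.ValidEdge h → ∃ t, T.Exceptional R t ∧ (h ∈ t.1 ∨ T.op h ∈ t.1)

/-- The linear span `ℝE` of the indicator vectors of exceptional trails. -/
def exSpan (R : Framing T) : Submodule ℝ (T.H → ℝ) :=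
  Submodule.span ℝ {x | ∃ t, T.Exceptional R t ∧ x = T.indicT t}

end TurbChart


namespace TurbChart

variable (T : TurbChart)

lemma sum_count_eq_countP {α : Type} [DecidableEq α] [Fintype α]
    (P : α → Prop) [DecidablePred P] (l : List α) :
    ∑ h ∈ Finset.univ.filter P, l.count h = l.countP (fun a => decide (P a)) := by
  induction l with
  | nil => simp
  | cons a t ih =>
    rw [List.countP_cons]
    simp only [List.count_cons]
    rw [Finset.sum_add_distrib, ih]
    congr 1
    simp [Finset.sum_ite_eq']

lemma sum_op_reindex (P : T.H → Prop) [DecidablePred P] (f : T.H → ℕ) :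
    ∑ h ∈ Finset.univ.filter P, f (T.op h) =
    ∑ h ∈ Finset.univ.filter (fun h => P (T.op h)), f h := by
  apply Finset.sum_nbij' T.op T.op <;> simp [T.op_op]

lemma fringe_not_internal {v : T.V} (h1 : T.Fringe v) (h2 : T.Internal v) : False := by
  unfold Fringe at h1; unfold Internal at h2; omega

lemma decide_rel_eq {a c : T.H} (hv : T.vert (T.op a) = T.vert c)
    (hside : T.side (T.op a) ≠ T.side c) (v : T.V) (b : Bool) :
    decide (T.vert (T.op a) = v ∧ T.side (T.op a) = b) =
    decide (T.vert c = v ∧ T.side c = (!b)) := by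
  have h2 : T.side (T.op a) = !T.side c := by
    cases h : T.side c <;> cases h' : T.side (T.op a) <;> simp_all
  rw [hv, h2]
  cases T.side c <;> cases b <;> simp

lemma string_pair_count (v : T.V) (b : Bool) (l : List T.H) (hs : T.IsString l) :
    l.dropLast.countP (fun a => decide (T.vert (T.op a) = v ∧ T.side (T.op a) = b)) =
    l.tail.countP (fun a => decide (T.vert a = v ∧ T.side a = (!b))) := by
  induction l with
  | nil => simp
  | cons a t ih =>
    cases t with
    | nil => simp
    | cons c u =>
      simp only [IsString, List.Chain', List.isChain_cons_cons] at hs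
      have ih' := ih hs.2
      rw [List.dropLast_cons₂, List.tail_cons, List.countP_cons, List.countP_cons, ih']
      rw [List.tail_cons] at ih'
      congr 1
      rw [T.decide_rel_eq hs.1.1 hs.1.2 v b]

lemma trail_head_eq_tail (v : T.V) (hv : T.Internal v) (b : Bool) (t : List T.H × Bool)
    (ht : T.IsTrail t) :
    t.1.countP (fun a => decide (T.vert (T.op a) = v ∧ T.side (T.op a) = b)) =
    t.1.countP (fun a => decide (T.vert a = v ∧ T.side a = (!b))) := by
  obtain ⟨l, isB⟩ := t
  rw [IsTrail] at ht
  dsimp only at *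
  cases isB with
  | false =>
    rw [if_neg (by simp)] at ht
    obtain ⟨hs, hne, hhead, hlast⟩ := ht
    have key := T.string_pair_count v b l hs
    have hnel := hne
    have hgl : l.getLast? = some (l.getLast hne) := List.getLast?_eq_getLast hne
    have hlastF : ¬ (T.vert (T.op (l.getLast hne)) = v ∧ T.side (T.op (l.getLast hne)) = b) := by
      intro hc
      exact T.fringe_not_internal (hlast _ hgl) (hc.1 ▸ hv)
    obtain ⟨a, t', rfl⟩ := List.exists_cons_of_ne_nil hne
    have hheadF : ¬ (T.vert a = v ∧ T.side a = (!b)) := by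
      intro hc
      exact T.fringe_not_internal (hhead a rfl) (hc.1 ▸ hv)
    have h1 : (a :: t').countP (fun x => decide (T.vert x = v ∧ T.side x = (!b))) =
        t'.countP (fun x => decide (T.vert x = v ∧ T.side x = (!b))) := by
      rw [List.countP_cons]
      simp [hheadF]
    rw [List.tail_cons] at key
    rw [h1, ← key]
    conv_lhs => rw [← List.dropLast_append_getLast hne]
    rw [List.countP_append]
    simp [hlastF]
  | true =>
    rw [if_pos rfl] at ht
    obtain ⟨hne, hs, -⟩ := ht
    simp only [IsString, List.Chain', List.isChain_append] at hs
    obtain ⟨hc1, -, hjunc⟩ := hs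
    have key := T.string_pair_count v b l hc1
    have hgl : l.getLast? = some (l.getLast hne) := List.getLast?_eq_getLast hne
    obtain ⟨a, t', rfl⟩ := List.exists_cons_of_ne_nil hne
    have hrel := hjunc _ hgl a rfl
    conv_lhs => rw [← List.dropLast_append_getLast hne]
    rw [List.countP_append, key, List.tail_cons]
    conv_rhs => rw [List.countP_cons]
    rw [List.countP_singleton, T.decide_rel_eq hrel.1 hrel.2 v b]

lemma isFlow_indicT (t : List T.H × Bool) (ht : T.IsTrail t) : T.IsFlow (T.indicT t) := by
  constructor
  · intro h
    simp only [indicT, indic, T.op_op]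
    push_cast
    ring
  · intro v hv
    have e1 : ∀ b : Bool, ∑ h ∈ Finset.univ.filter (fun h => T.vert h = v ∧ T.side h = b),
        T.indicT t h =
        ((t.1.countP (fun a => decide (T.vert a = v ∧ T.side a = b)) +
          t.1.countP (fun a => decide (T.vert (T.op a) = v ∧ T.side (T.op a) = b)) : ℕ) : ℝ) := by
      intro b
      simp only [indicT, indic]
      push_cast
      rw [Finset.sum_add_distrib]
      congr 1
      · rw [← Nat.cast_sum]
        congr 1
        exact sum_count_eq_countP _ _
      · rw [← Nat.cast_sum]
        congr 1
        rw [T.sum_op_reindex (fun h => T.vert h = v ∧ T.side h = b) (t.1.count)]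
        exact sum_count_eq_countP _ _
    rw [e1 true, e1 false]
    congr 1
    rw [T.trail_head_eq_tail v hv true t ht, T.trail_head_eq_tail v hv false t ht]
    simp only [Bool.not_true, Bool.not_false]
    omega

lemma isFlow_add {F G : T.H → ℝ} (hF : T.IsFlow F) (hG : T.IsFlow G) : T.IsFlow (F + G) := by
  refine ⟨fun h => ?_, fun v hv => ?_⟩
  · simp [hF.1 h, hG.1 h]
  · simp only [Pi.add_apply, Finset.sum_add_distrib, hF.2 v hv, hG.2 v hv]

lemma isFlow_smul {F : T.H → ℝ} (c : ℝ) (hF : T.IsFlow F) : T.IsFlow (c • F) := by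
  refine ⟨fun h => ?_, fun v hv => ?_⟩
  · simp [hF.1 h]
  · simp only [Pi.smul_apply, smul_eq_mul, ← Finset.mul_sum, hF.2 v hv]

lemma isFlow_zero : T.IsFlow 0 := ⟨fun _ => rfl, fun _ _ => by simp⟩

lemma isFlow_sum {ι : Type*} (s : Finset ι) (f : ι → T.H → ℝ)
    (hf : ∀ i ∈ s, T.IsFlow (f i)) : T.IsFlow (∑ i ∈ s, f i) := by
  classical
  induction s using Finset.induction with
  | empty => simpa using TurbChart.isFlow_zero T
  | insert _ _ hx ih =>
    rw [Finset.sum_insert hx]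
    exact TurbChart.isFlow_add T (hf _ (Finset.mem_insert_self _ _))
      (ih fun i hi => hf i (Finset.mem_insert_of_mem hi))

lemma indic_nonneg (l : List T.H) (h : T.H) : 0 ≤ T.indic l h := by
  simp only [indic]
  positivity

lemma one_le_indic {l : List T.H} {h : T.H} (hm : h ∈ l ∨ T.op h ∈ l) :
    1 ≤ T.indic l h := by
  simp only [indic]
  have : 1 ≤ l.count h + l.count (T.op h) := by
    cases hm with
    | inl hm => have := List.count_pos_iff.2 hm; omega
    | inr hm => have := List.count_pos_iff.2 hm; omega
  exact_mod_cast this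

end TurbChart

/-- If a framed turbulence chart is amply framed, then the reduced
nonnegative space equals the full reduced space: every flow is congruent, modulo the
span of indicator vectors of exceptional trails, to a nonnegative flow. -/
theorem reduced_nonneg_eq_reduced_of_amplyFramed (T : TurbChart) (R : Framing T)
    (hamp : T.AmplyFramed R) :
    ∀ F : T.H → ℝ, T.IsFlow F →
      ∃ G : T.H → ℝ, T.IsFlow G ∧ (∀ h, 0 ≤ G h) ∧ F - G ∈ T.exSpan R := by
  classical
  intro F hF
  set M : ℝ := ∑ h : T.H, |F h| with hM
  have hM0 : 0 ≤ M := Finset.sum_nonneg fun _ _ => abs_nonneg _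
  have hMF : ∀ h, |F h| ≤ M := fun h =>
    Finset.single_le_sum (f := fun h => |F h|) (fun _ _ => abs_nonneg _) (Finset.mem_univ h)
  set S : Finset T.H := Finset.univ.filter (fun h => F h < 0) with hS
  have hvalid : ∀ h ∈ S, T.ValidEdge h := by
    intro h hh
    rw [hS, Finset.mem_filter] at hh
    exact ⟨F, hF, ne_of_lt hh.2⟩
  choose tr htr using fun (h : T.H) (hh : h ∈ S) => hamp h (hvalid h hh)
  set G : T.H → ℝ := F + ∑ h ∈ S.attach, M • T.indicT (tr h.1 h.2) with hG
  refine ⟨G, ?_, ?_, ?_⟩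
  · exact TurbChart.isFlow_add T hF (T.isFlow_sum _ _ fun i _ =>
      TurbChart.isFlow_smul T M (T.isFlow_indicT _ (htr i.1 i.2).1.1))
  · intro h
    rw [hG]
    simp only [Pi.add_apply, Finset.sum_apply, Pi.smul_apply, smul_eq_mul]
    by_cases hneg : F h < 0
    · have hhS : h ∈ S := by rw [hS]; simp [hneg]
      have key : M * T.indicT (tr h hhS) h ≤
          ∑ i ∈ S.attach, M * T.indicT (tr i.1 i.2) h := by
        apply Finset.single_le_sum (f := fun i : {x // x ∈ S} => M * T.indicT (tr i.1 i.2) h)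
          (fun i _ => mul_nonneg hM0 (T.indic_nonneg _ _)) (Finset.mem_attach _ ⟨h, hhS⟩)
      have h1 : M ≤ M * T.indicT (tr h hhS) h := by
        nth_rewrite 1 [← mul_one M]
        exact mul_le_mul_of_nonneg_left (T.one_le_indic (htr h hhS).2) hM0
      have h2 : -F h ≤ M := (neg_le_abs _).trans (hMF h)
      linarith
    · push_neg at hneg
      have : 0 ≤ ∑ i ∈ S.attach, M * T.indicT (tr i.1 i.2) h :=
        Finset.sum_nonneg fun i _ => mul_nonneg hM0 (T.indic_nonneg _ _)
      linarith
  · have : F - G = -∑ h ∈ S.attach, M • T.indicT (tr h.1 h.2) := by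
      rw [hG]; abel
    rw [this]
    apply neg_mem
    apply Submodule.sum_mem
    intro i _
    apply Submodule.smul_mem
    apply Submodule.subset_span
    exact ⟨tr i.1 i.2, (htr i.1 i.2).1, rfl⟩
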